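/- In the uniform swap Schelling game with tolerance parameter τ ≤ 1/2, the number of colored pairs Φ is an ordinal potential function: for every window size w ≥ 1, every finite connected graph G, every bijective placement p and every improving swap of two agents producing the placement p', one has Φ(p') < Φ(p). Consequently the u-SSG is a potential game. -/

import Mathlib

open SimpleGraph Finset

namespace Schelling

variable {V I : Type*}

/-- The `w`-neighborhood of a node `u`: all nodes `v ≠ u` with `d_G(u,v) ≤ w`. -/
def nbhd (G : SimpleGraph V) (w : ℕ) (u : V) : Set V :=
  {v | v ≠ u ∧ G.dist u v ≤ w}

/-- `|N⁺(p(x))|`: number of nodes in the `w`-neighborhood of `p x` occupied by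
agents of the same type as `x`. -/
noncomputable def sCount (G : SimpleGraph V) (w : ℕ) (tp : I → Bool) (p : I → V) (x : I) : ℕ :=
  {v | v ∈ nbhd G w (p x) ∧ ∃ y, p y = v ∧ tp y = tp x}.ncard

/-- `|N⁻(p(x))|`: number of nodes in the `w`-neighborhood of `p x` occupied by
agents of the other type. -/
noncomputable def dCount (G : SimpleGraph V) (w : ℕ) (tp : I → Bool) (p : I → V) (x : I) : ℕ :=
  {v | v ∈ nbhd G w (p x) ∧ ∃ y, p y = v ∧ tp y ≠ tp x}.ncard

/-- An agent is isolated if no node of its neighborhood is occupied. -/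
def isolated (G : SimpleGraph V) (w : ℕ) (tp : I → Bool) (p : I → V) (x : I) : Prop :=
  sCount G w tp p x + dCount G w tp p x = 0

/-- The (scalar) cost of agent `x`: `τ` if isolated, otherwise
`max 0 (τ - |N⁺|/(|N⁺| + |N⁻|))`. -/
noncomputable def ucost (G : SimpleGraph V) (w : ℕ) (τ : ℝ) (tp : I → Bool) (p : I → V)
    (x : I) : ℝ :=
  if sCount G w tp p x + dCount G w tp p x = 0 then τ
  else max 0 (τ - (sCount G w tp p x : ℝ) / ((sCount G w tp p x : ℝ) + (dCount G w tp p x : ℝ)))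

/-- An agent is happy if it is not isolated and its local happiness ratio is at least `τ`. -/
def happy (G : SimpleGraph V) (w : ℕ) (τ : ℝ) (tp : I → Bool) (p : I → V) (x : I) : Prop :=
  sCount G w tp p x + dCount G w tp p x ≠ 0 ∧
    τ ≤ (sCount G w tp p x : ℝ) / ((sCount G w tp p x : ℝ) + (dCount G w tp p x : ℝ))

/-- The vector cost of agent `x`: scalar cost together with `d_G(fav_x, p x) + 1`,
to be compared lexicographically. -/
noncomputable def vcost (G : SimpleGraph V) (w : ℕ) (τ : ℝ) (tp : I → Bool) (fav : I → V)
    (p : I → V) (x : I) : ℝ × ℕ :=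
  (ucost G w τ tp p x, G.dist (fav x) (p x) + 1)

/-- The number of colored pairs `Φ(p) = (1/2) · Σ_x |N⁻(p(x))|`. -/
noncomputable def Phi [Fintype I] (G : SimpleGraph V) (w : ℕ) (tp : I → Bool) (p : I → V) : ℝ :=
  (1 / 2) * ∑ x : I, (dCount G w tp p x : ℝ)

/-- The pair potential `(Φ(p), Σ_x d_G(fav_x, p x))`, compared lexicographically. -/
noncomputable def PhiPair [Fintype I] (G : SimpleGraph V) (w : ℕ) (tp : I → Bool) (fav : I → V)
    (p : I → V) : ℝ × ℕ :=
  (Phi G w tp p, ∑ x : I, G.dist (fav x) (p x))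

/-- The placement obtained from `p` by swapping the locations of agents `x` and `y`. -/
def swapP [DecidableEq I] (p : I → V) (x y : I) : I → V := p ∘ Equiv.swap x y

/-- The agents of type `A`. -/
def typeA [Fintype I] (tp : I → Bool) : Finset I := Finset.univ.filter (fun i => tp i = true)

/-- The agents of type `B`. -/
def typeB [Fintype I] (tp : I → Bool) : Finset I := Finset.univ.filter (fun i => tp i = false)

/-- A placement is stable for the uniform SSG if no pair of agents can both strictly
decrease their cost by swapping. -/
def uStable (G : SimpleGraph V) (w : ℕ) (τ : ℝ) (tp : I → Bool) (p : I → V)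
    [DecidableEq I] : Prop :=
  ∀ x y : I, ¬ (ucost G w τ tp (swapP p x y) x < ucost G w τ tp p x ∧
                ucost G w τ tp (swapP p x y) y < ucost G w τ tp p y)

/-- A placement is stable for the SSG with favorite nodes if no pair of agents can both
strictly lexicographically decrease their cost vector by swapping. -/
def vStable (G : SimpleGraph V) (w : ℕ) (τ : ℝ) (tp : I → Bool) (fav : I → V) (p : I → V)
    [DecidableEq I] : Prop :=
  ∀ x y : I, ¬ (toLex (vcost G w τ tp fav (swapP p x y) x) < toLex (vcost G w τ tp fav p x) ∧
                toLex (vcost G w τ tp fav (swapP p x y) y) < toLex (vcost G w τ tp fav p y))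



open Classical in
/-- The weight of the (ordered) pair of nodes `(u,v)` in the jump-game potential:
`1` if both are occupied by agents of different types, `1/3` if at least one is empty,
and `0` otherwise. -/
noncomputable def edgeW (tp : I → Bool) (p : I → V) (u v : V) : ℝ :=
  if ∃ x y : I, p x = u ∧ p y = v ∧ tp x ≠ tp y then 1
  else if (∀ x : I, p x ≠ u) ∨ (∀ y : I, p y ≠ v) then 1 / 3
  else 0

open Classical in
/-- The edge-weight potential `Φ(p) = Σ_{e ∈ E} w_e(p)`, written as half the sum over
ordered adjacent pairs (each edge is counted twice, and `edgeW` is symmetric). -/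
noncomputable def jumpPhi [Fintype V] (G : SimpleGraph V) (tp : I → Bool) (p : I → V) : ℝ :=
  (1 / 2) * ∑ u : V, ∑ v : V, if G.Adj u v then edgeW tp p u v else 0

/-- A placement is stable for the uniform JSG if no agent can strictly decrease her cost
by jumping to an empty node. -/
def jStable (G : SimpleGraph V) (w : ℕ) (τ : ℝ) (tp : I → Bool) (p : I → V)
    [DecidableEq I] : Prop :=
  ∀ (x : I) (v : V), v ∉ Set.range p →
    ¬ (ucost G w τ tp (Function.update p x v) x < ucost G w τ tp p x)

/-- The social cost of a placement: the number of unhappy agents together with the total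
distance cost, compared lexicographically. -/
noncomputable def socialCost [Fintype I] (G : SimpleGraph V) (w : ℕ) (τ : ℝ) (tp : I → Bool)
    (fav : I → V) (p : I → V) : ℕ × ℕ :=
  ({x : I | ¬ happy G w τ tp p x}.ncard, ∑ x : I, (G.dist (fav x) (p x) + 1))


end Schelling

open Schelling

section Helpers
open Finset

open Classical in
private noncomputable def ind (P : Prop) : ℤ := if P then 1 else 0

private lemma ind_true {P : Prop} (h : P) : ind P = 1 := by simp [ind, h]
private lemma ind_false {P : Prop} (h : ¬ P) : ind P = 0 := by simp [ind, h]
private lemma ind_congr {P Q : Prop} (h : P ↔ Q) : ind P = ind Q := by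
  classical
  unfold ind; exact if_congr h rfl rfl
private lemma ind_nonneg (P : Prop) : 0 ≤ ind P := by
  unfold ind; split <;> norm_num
private lemma ind_and_split (A : Prop) (B : Prop) :
    ind (A ∧ B) + ind (A ∧ ¬ B) = ind A := by
  classical
  unfold ind
  by_cases hA : A <;> by_cases hB : B <;> simp [hA, hB]

open Classical in
private noncomputable def cnt {I : Type*} [Fintype I] (P : I → Prop) : ℕ :=
  (Finset.univ.filter P).card

open Classical in
private lemma cnt_eq_sum {I : Type*} [Fintype I] (P : I → Prop) :
    (cnt P : ℤ) = ∑ z, ind (P z) := by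
  unfold cnt ind
  rw [Finset.card_filter]
  push_cast
  rfl

private lemma cnt_congr {I : Type*} [Fintype I] {P Q : I → Prop} (h : ∀ z, P z ↔ Q z) :
    cnt P = cnt Q := by
  classical
  have : (cnt P : ℤ) = cnt Q := by
    rw [cnt_eq_sum, cnt_eq_sum]
    exact Finset.sum_congr rfl fun z _ => ind_congr (h z)
  exact_mod_cast this

open Classical in
private lemma cnt_pos {I : Type*} [Fintype I] {P : I → Prop} (h : ∃ z, P z) : 0 < cnt P := by
  obtain ⟨z, hz⟩ := h
  unfold cnt
  exact Finset.card_pos.2 ⟨z, Finset.mem_filter.2 ⟨Finset.mem_univ _, hz⟩⟩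

private lemma cnt_split {I : Type*} [Fintype I] (A : I → Prop) (B : I → Prop) :
    (cnt (fun z => A z ∧ B z) : ℤ) + cnt (fun z => A z ∧ ¬ B z) = cnt A := by
  rw [cnt_eq_sum, cnt_eq_sum, cnt_eq_sum, ← Finset.sum_add_distrib]
  exact Finset.sum_congr rfl fun z _ => ind_and_split (A z) (B z)

open Classical in
private lemma cnt_eq_ncard {I : Type*} [Fintype I] (P : I → Prop) : {z | P z}.ncard = cnt P := by
  unfold cnt
  rw [← Set.ncard_coe_finset]
  congr 1
  ext z; simp

open Classical in
private lemma cnt_occ {V I : Type*} [Fintype I] (p : I → V) (hp : Function.Injective p)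
    (N : Set V) (P : I → Prop) :
    {v | v ∈ N ∧ ∃ z, p z = v ∧ P z}.ncard = cnt (fun z => p z ∈ N ∧ P z) := by
  have hs : {v | v ∈ N ∧ ∃ z, p z = v ∧ P z} = p '' {z | p z ∈ N ∧ P z} := by
    ext v
    constructor
    · rintro ⟨hv, z, rfl, hP⟩; exact ⟨z, ⟨hv, hP⟩, rfl⟩
    · rintro ⟨z, ⟨hv, hP⟩, rfl⟩; exact ⟨hv, z, rfl, hP⟩
  rw [hs, Set.ncard_image_of_injective _ hp]
  exact cnt_eq_ncard _

private lemma cnt_comp_equiv {I : Type*} [Fintype I] (σ : Equiv.Perm I) (P : I → Prop) :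
    cnt P = cnt (fun z => P (σ z)) := by
  have : (cnt P : ℤ) = cnt (fun z => P (σ z)) := by
    rw [cnt_eq_sum, cnt_eq_sum]
    exact (Equiv.sum_comp σ (fun z => ind (P z))).symm
  exact_mod_cast this

private lemma cnt_except {I : Type*} [Fintype I] [DecidableEq I] (P Q : I → Prop)
    (x y : I) (hxy : x ≠ y) (h : ∀ z, z ≠ x → z ≠ y → (P z ↔ Q z)) :
    (cnt Q : ℤ) = cnt P + (ind (Q x) - ind (P x)) + (ind (Q y) - ind (P y)) := by
  have key : ∑ z, (ind (Q z) - ind (P z))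
      = ∑ z ∈ ({x, y} : Finset I), (ind (Q z) - ind (P z)) := by
    refine (Finset.sum_subset (Finset.subset_univ _) ?_).symm
    intro z _ hz
    simp only [Finset.mem_insert, Finset.mem_singleton, not_or] at hz
    rw [ind_congr (h z hz.1 hz.2), sub_self]
  rw [Finset.sum_pair hxy, Finset.sum_sub_distrib] at key
  rw [cnt_eq_sum, cnt_eq_sum]
  linarith [key]

private lemma potential_arith (sx dx sy dy μ : ℤ)
    (hμ : μ = 0 ∨ μ = 1)
    (h1 : sx < dx) (h2 : sy < dy)
    (h3 : sx * (sy + dy) < (dy - μ) * (sx + dx))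
    (h4 : sy * (sx + dx) < (dx - μ) * (sy + dy)) :
    sx + sy + 2*μ - dx - dy < 0 := by
  rcases hμ with rfl | rfl
  · linarith
  · by_contra hcon
    push_neg at hcon
    have hdx : dx = sx + 1 := by omega
    have hdy : dy = sy + 1 := by omega
    subst hdx hdy
    nlinarith [h3, h4]

end Helpers

open Schelling

/-- In the uniform swap Schelling game with tolerance parameter `τ ≤ 1/2`,
the number of colored pairs `Φ` is an ordinal potential function: for every window size
`w ≥ 1`, every finite connected graph `G`, every bijective placement `p` and every improving
swap of two agents producing the placement `p'`, one has `Φ(p') < Φ(p)`.  Consequently the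
u-SSG is a potential game. -/
theorem uSSG_Phi_is_potential {V I : Type*} [Fintype V] [Fintype I] [DecidableEq I]
    (G : SimpleGraph V) (hG : G.Connected)
    (w : ℕ) (hw : 1 ≤ w)
    (τ : ℝ) (hτ0 : 0 ≤ τ) (hτ : τ ≤ 1 / 2)
    (tp : I → Bool) (hA : 2 ≤ (typeA tp).card) (hB : 2 ≤ (typeB tp).card)
    (p : I → V) (hp : Function.Bijective p)
    (x y : I)
    (hx : ucost G w τ tp (swapP p x y) x < ucost G w τ tp p x)
    (hy : ucost G w τ tp (swapP p x y) y < ucost G w τ tp p y) :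
    Phi G w tp (swapP p x y) < Phi G w tp p := by
  classical
  set p' := swapP p x y with hp'def
  set σ : Equiv.Perm I := Equiv.swap x y with hσ
  have hσx : σ x = y := Equiv.swap_apply_left x y
  have hσy : σ y = x := Equiv.swap_apply_right x y
  have hσσ : ∀ z, σ (σ z) = z := fun z => Equiv.swap_apply_self x y z
  have hσo : ∀ z, z ≠ x → z ≠ y → σ z = z := fun z h1 h2 => Equiv.swap_apply_of_ne_of_ne h1 h2
  have hp'z : ∀ z, p' z = p (σ z) := fun z => rfl
  have hp'inj : Function.Injective p' := hp.1.comp σ.injective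
  -- x and y are distinct agents
  have hxy : x ≠ y := by
    rintro rfl
    have heq : p' = p := by
      funext z; rw [hp'z, hσ]; simp
    rw [heq] at hx
    exact lt_irrefl _ hx
  -- neighborhood basics
  have hnbsymm : ∀ u v : V, v ∈ nbhd G w u ↔ u ∈ nbhd G w v := by
    intro u v
    constructor
    · rintro ⟨h1, h2⟩; exact ⟨h1.symm, by rwa [SimpleGraph.dist_comm]⟩
    · rintro ⟨h1, h2⟩; exact ⟨h1.symm, by rwa [SimpleGraph.dist_comm]⟩
  have hself : ∀ u : V, u ∉ nbhd G w u := by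
    intro u hu; exact hu.1 rfl
  -- every neighborhood contains an occupied node
  have hocc : ∀ u : V, ∃ z : I, p z ∈ nbhd G w u := by
    intro u
    obtain ⟨u', hu'⟩ : ∃ u' : V, u' ≠ u := by
      by_cases h : p x = u
      · refine ⟨p y, fun hh => hxy ?_⟩
        exact (hp.1 (hh.trans h.symm)).symm
      · exact ⟨p x, h⟩
    obtain ⟨W⟩ := hG.preconnected u u'
    have hv : ∃ v : V, v ∈ nbhd G w u := by
      cases W with
      | nil => exact absurd rfl hu'
      | cons h q =>
        refine ⟨_, h.ne', ?_⟩
        rw [SimpleGraph.dist_eq_one_iff_adj.mpr h]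
        exact hw
    obtain ⟨v, hv⟩ := hv
    obtain ⟨z, rfl⟩ := hp.2 v
    exact ⟨z, hv⟩
  -- rewriting the counts as counts of agents
  have hsC : ∀ z : I, sCount G w tp p z
      = cnt (fun z' => p z' ∈ nbhd G w (p z) ∧ tp z' = tp z) :=
    fun z => cnt_occ p hp.1 _ _
  have hdC : ∀ z : I, dCount G w tp p z
      = cnt (fun z' => p z' ∈ nbhd G w (p z) ∧ tp z' ≠ tp z) :=
    fun z => cnt_occ p hp.1 _ _
  have hsC' : ∀ z : I, sCount G w tp p' z
      = cnt (fun z' => p z' ∈ nbhd G w (p (σ z)) ∧ tp (σ z') = tp z) := by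
    intro z
    have h1 : sCount G w tp p' z
        = cnt (fun z' => p' z' ∈ nbhd G w (p' z) ∧ tp z' = tp z) :=
      cnt_occ p' hp'inj _ _
    rw [h1, cnt_comp_equiv σ]
    apply cnt_congr
    intro z'
    rw [hp'z, hp'z, hσσ]
  have hdC' : ∀ z : I, dCount G w tp p' z
      = cnt (fun z' => p z' ∈ nbhd G w (p (σ z)) ∧ tp (σ z') ≠ tp z) := by
    intro z
    have h1 : dCount G w tp p' z
        = cnt (fun z' => p' z' ∈ nbhd G w (p' z) ∧ tp z' ≠ tp z) :=
      cnt_occ p' hp'inj _ _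
    rw [h1, cnt_comp_equiv σ]
    apply cnt_congr
    intro z'
    rw [hp'z, hp'z, hσσ]
  -- the two swapping agents must have different types
  have hab : tp x ≠ tp y := by
    intro htp
    have hσtp : ∀ z, tp (σ z) = tp z := by
      intro z
      rcases eq_or_ne z x with rfl | hzx
      · rw [hσx, htp]
      rcases eq_or_ne z y with rfl | hzy
      · rw [hσy, htp]
      rw [hσo z hzx hzy]
    have e1 : ucost G w τ tp p' x = ucost G w τ tp p y := by
      have es : sCount G w tp p' x = sCount G w tp p y := by
        rw [hsC' x, hsC y, hσx]
        exact cnt_congr fun z' => by rw [hσtp, htp]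
      have ed : dCount G w tp p' x = dCount G w tp p y := by
        rw [hdC' x, hdC y, hσx]
        exact cnt_congr fun z' => by rw [hσtp, htp]
      rw [ucost, ucost, es, ed]
    have e2 : ucost G w τ tp p' y = ucost G w τ tp p x := by
      have es : sCount G w tp p' y = sCount G w tp p x := by
        rw [hsC' y, hsC x, hσy]
        exact cnt_congr fun z' => by rw [hσtp, htp]
      have ed : dCount G w tp p' y = dCount G w tp p x := by
        rw [hdC' y, hdC x, hσy]
        exact cnt_congr fun z' => by rw [hσtp, htp]
      rw [ucost, ucost, es, ed]
    rw [e1] at hx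
    rw [e2] at hy
    linarith
  -- boolean type facts
  have hbool1 : ∀ c : Bool, (c ≠ tp y ↔ c = tp x) := by
    intro c
    constructor
    · intro h; rw [Bool.eq_not_of_ne h, Bool.eq_not_of_ne hab]
    · intro h; rw [h]; exact hab
  have hbool2 : ∀ c : Bool, (c ≠ tp x ↔ c = tp y) := by
    intro c
    constructor
    · intro h; rw [Bool.eq_not_of_ne h, Bool.eq_not_of_ne hab, Bool.not_not]
    · intro h; rw [h]; exact fun hh => hab hh.symm
  -- the basic counts
  set sx := cnt (fun z => p z ∈ nbhd G w (p x) ∧ tp z = tp x) with hsxdef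
  set dx := cnt (fun z => p z ∈ nbhd G w (p x) ∧ tp z ≠ tp x) with hdxdef
  set sy := cnt (fun z => p z ∈ nbhd G w (p y) ∧ tp z = tp y) with hsydef
  set dy := cnt (fun z => p z ∈ nbhd G w (p y) ∧ tp z ≠ tp y) with hdydef
  set μ : ℤ := ind (p x ∈ nbhd G w (p y)) with hμdef
  have hμ01 : μ = 0 ∨ μ = 1 := by
    by_cases hM : p x ∈ nbhd G w (p y)
    · right; rw [hμdef]; exact ind_true hM
    · left; rw [hμdef]; exact ind_false hM
  -- old counts
  have hsx : sCount G w tp p x = sx := hsC x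
  have hdx : dCount G w tp p x = dx := hdC x
  have hsy : sCount G w tp p y = sy := hsC y
  have hdy : dCount G w tp p y = dy := hdC y
  -- new counts
  have E1 : (sCount G w tp p' x : ℤ) = (dy : ℤ) - μ := by
    have h2 : sCount G w tp p' x
        = cnt (fun z' => p z' ∈ nbhd G w (p y) ∧ tp (σ z') = tp x) := by
      rw [hsC' x, hσx]
    have h : (cnt (fun z' => p z' ∈ nbhd G w (p y) ∧ tp (σ z') = tp x) : ℤ)
        = (dy : ℤ)
          + (ind (p x ∈ nbhd G w (p y) ∧ tp (σ x) = tp x)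
              - ind (p x ∈ nbhd G w (p y) ∧ tp x ≠ tp y))
          + (ind (p y ∈ nbhd G w (p y) ∧ tp (σ y) = tp x)
              - ind (p y ∈ nbhd G w (p y) ∧ tp y ≠ tp y)) :=
      cnt_except _ _ x y hxy (fun z hzx hzy => by
        rw [hσo z hzx hzy]
        exact and_congr_right fun _ => hbool1 (tp z))
    have i1 : ind (p x ∈ nbhd G w (p y) ∧ tp (σ x) = tp x) = 0 := by
      apply ind_false; rintro ⟨-, hc⟩; rw [hσx] at hc; exact hab hc.symm
    have i2 : ind (p x ∈ nbhd G w (p y) ∧ tp x ≠ tp y) = μ := by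
      rw [hμdef]
      exact ind_congr ⟨fun h => h.1, fun h => ⟨h, hab⟩⟩
    have i3 : ind (p y ∈ nbhd G w (p y) ∧ tp (σ y) = tp x) = 0 := by
      apply ind_false; rintro ⟨hc, -⟩; exact hself _ hc
    have i4 : ind (p y ∈ nbhd G w (p y) ∧ tp y ≠ tp y) = 0 := by
      apply ind_false; rintro ⟨-, hc⟩; exact hc rfl
    rw [h2, h, i1, i2, i3, i4]
    ring
  have E2 : (dCount G w tp p' x : ℤ) = (sy : ℤ) + μ := by
    have h2 : dCount G w tp p' x
        = cnt (fun z' => p z' ∈ nbhd G w (p y) ∧ tp (σ z') ≠ tp x) := by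
      rw [hdC' x, hσx]
    have h : (cnt (fun z' => p z' ∈ nbhd G w (p y) ∧ tp (σ z') ≠ tp x) : ℤ)
        = (sy : ℤ)
          + (ind (p x ∈ nbhd G w (p y) ∧ tp (σ x) ≠ tp x)
              - ind (p x ∈ nbhd G w (p y) ∧ tp x = tp y))
          + (ind (p y ∈ nbhd G w (p y) ∧ tp (σ y) ≠ tp x)
              - ind (p y ∈ nbhd G w (p y) ∧ tp y = tp y)) :=
      cnt_except _ _ x y hxy (fun z hzx hzy => by
        rw [hσo z hzx hzy]
        exact and_congr_right fun _ => (hbool2 (tp z)).symm)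
    have i1 : ind (p x ∈ nbhd G w (p y) ∧ tp (σ x) ≠ tp x) = μ := by
      rw [hμdef]
      refine ind_congr ⟨fun h => h.1, fun h => ⟨h, ?_⟩⟩
      rw [hσx]; exact fun hh => hab hh.symm
    have i2 : ind (p x ∈ nbhd G w (p y) ∧ tp x = tp y) = 0 := by
      apply ind_false; rintro ⟨-, hc⟩; exact hab hc
    have i3 : ind (p y ∈ nbhd G w (p y) ∧ tp (σ y) ≠ tp x) = 0 := by
      apply ind_false; rintro ⟨hc, -⟩; exact hself _ hc
    have i4 : ind (p y ∈ nbhd G w (p y) ∧ tp y = tp y) = 0 := by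
      apply ind_false; rintro ⟨hc, -⟩; exact hself _ hc
    rw [h2, h, i1, i2, i3, i4]
    ring
  have E3 : (sCount G w tp p' y : ℤ) = (dx : ℤ) - μ := by
    have h2 : sCount G w tp p' y
        = cnt (fun z' => p z' ∈ nbhd G w (p x) ∧ tp (σ z') = tp y) := by
      rw [hsC' y, hσy]
    have h : (cnt (fun z' => p z' ∈ nbhd G w (p x) ∧ tp (σ z') = tp y) : ℤ)
        = (dx : ℤ)
          + (ind (p x ∈ nbhd G w (p x) ∧ tp (σ x) = tp y)
              - ind (p x ∈ nbhd G w (p x) ∧ tp x ≠ tp x))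
          + (ind (p y ∈ nbhd G w (p x) ∧ tp (σ y) = tp y)
              - ind (p y ∈ nbhd G w (p x) ∧ tp y ≠ tp x)) :=
      cnt_except _ _ x y hxy (fun z hzx hzy => by
        rw [hσo z hzx hzy]
        exact and_congr_right fun _ => hbool2 (tp z))
    have i1 : ind (p x ∈ nbhd G w (p x) ∧ tp (σ x) = tp y) = 0 := by
      apply ind_false; rintro ⟨hc, -⟩; exact hself _ hc
    have i2 : ind (p x ∈ nbhd G w (p x) ∧ tp x ≠ tp x) = 0 := by
      apply ind_false; rintro ⟨hc, -⟩; exact hself _ hc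
    have i3 : ind (p y ∈ nbhd G w (p x) ∧ tp (σ y) = tp y) = 0 := by
      apply ind_false; rintro ⟨-, hc⟩; rw [hσy] at hc; exact hab hc
    have i4 : ind (p y ∈ nbhd G w (p x) ∧ tp y ≠ tp x) = μ := by
      rw [hμdef]
      refine ind_congr ⟨fun h => (hnbsymm _ _).mp h.1, fun h => ⟨(hnbsymm _ _).mp h, ?_⟩⟩
      exact fun hh => hab hh.symm
    rw [h2, h, i1, i2, i3, i4]
    ring
  have E4 : (dCount G w tp p' y : ℤ) = (sx : ℤ) + μ := by
    have h2 : dCount G w tp p' y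
        = cnt (fun z' => p z' ∈ nbhd G w (p x) ∧ tp (σ z') ≠ tp y) := by
      rw [hdC' y, hσy]
    have h : (cnt (fun z' => p z' ∈ nbhd G w (p x) ∧ tp (σ z') ≠ tp y) : ℤ)
        = (sx : ℤ)
          + (ind (p x ∈ nbhd G w (p x) ∧ tp (σ x) ≠ tp y)
              - ind (p x ∈ nbhd G w (p x) ∧ tp x = tp x))
          + (ind (p y ∈ nbhd G w (p x) ∧ tp (σ y) ≠ tp y)
              - ind (p y ∈ nbhd G w (p x) ∧ tp y = tp x)) :=
      cnt_except _ _ x y hxy (fun z hzx hzy => by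
        rw [hσo z hzx hzy]
        exact and_congr_right fun _ => (hbool1 (tp z)).symm)
    have i1 : ind (p x ∈ nbhd G w (p x) ∧ tp (σ x) ≠ tp y) = 0 := by
      apply ind_false; rintro ⟨hc, -⟩; exact hself _ hc
    have i2 : ind (p x ∈ nbhd G w (p x) ∧ tp x = tp x) = 0 := by
      apply ind_false; rintro ⟨hc, -⟩; exact hself _ hc
    have i3 : ind (p y ∈ nbhd G w (p x) ∧ tp (σ y) ≠ tp y) = μ := by
      rw [hμdef]
      refine ind_congr ⟨fun h => (hnbsymm _ _).mp h.1, fun h => ⟨(hnbsymm _ _).mp h, ?_⟩⟩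
      rw [hσy]; exact hab
    have i4 : ind (p y ∈ nbhd G w (p x) ∧ tp y = tp x) = 0 := by
      apply ind_false; rintro ⟨-, hc⟩; exact hab hc.symm
    rw [h2, h, i1, i2, i3, i4]
    ring
  -- non-isolation
  have hnux : 0 < sx + dx := by
    have hsplit : (sx : ℤ) + (dx : ℤ) = cnt (fun z => p z ∈ nbhd G w (p x)) :=
      cnt_split _ _
    have hpos : 0 < cnt (fun z : I => p z ∈ nbhd G w (p x)) := cnt_pos (hocc (p x))
    have : 0 < (sx : ℤ) + dx := by rw [hsplit]; exact_mod_cast hpos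
    exact_mod_cast this
  have hnvy : 0 < sy + dy := by
    have hsplit : (sy : ℤ) + (dy : ℤ) = cnt (fun z => p z ∈ nbhd G w (p y)) :=
      cnt_split _ _
    have hpos : 0 < cnt (fun z : I => p z ∈ nbhd G w (p y)) := cnt_pos (hocc (p y))
    have : 0 < (sy : ℤ) + dy := by rw [hsplit]; exact_mod_cast hpos
    exact_mod_cast this
  have hnzx : sCount G w tp p x + dCount G w tp p x ≠ 0 := by
    rw [hsx, hdx]; omega
  have hnzy : sCount G w tp p y + dCount G w tp p y ≠ 0 := by
    rw [hsy, hdy]; omega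
  have hsum'x : sCount G w tp p' x + dCount G w tp p' x = sy + dy := by
    have : (sCount G w tp p' x : ℤ) + (dCount G w tp p' x : ℤ) = (sy : ℤ) + dy := by
      rw [E1, E2]; ring
    exact_mod_cast this
  have hsum'y : sCount G w tp p' y + dCount G w tp p' y = sx + dx := by
    have : (sCount G w tp p' y : ℤ) + (dCount G w tp p' y : ℤ) = (sx : ℤ) + dx := by
      rw [E3, E4]; ring
    exact_mod_cast this
  have hnzx' : sCount G w tp p' x + dCount G w tp p' x ≠ 0 := by rw [hsum'x]; omega
  have hnzy' : sCount G w tp p' y + dCount G w tp p' y ≠ 0 := by rw [hsum'y]; omega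
  -- unfolding the costs
  have hnuxR : (0:ℝ) < (sx:ℝ) + dx := by exact_mod_cast hnux
  have hnvyR : (0:ℝ) < (sy:ℝ) + dy := by exact_mod_cast hnvy
  have hux : ucost G w τ tp p x = max 0 (τ - (sx:ℝ)/((sx:ℝ)+(dx:ℝ))) := by
    unfold ucost
    rw [if_neg hnzx, hsx, hdx]
  have huy : ucost G w τ tp p y = max 0 (τ - (sy:ℝ)/((sy:ℝ)+(dy:ℝ))) := by
    unfold ucost
    rw [if_neg hnzy, hsy, hdy]
  have hux' : ucost G w τ tp p' x = max 0 (τ - ((dy:ℝ)-(μ:ℝ))/((sy:ℝ)+(dy:ℝ))) := by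
    unfold ucost
    rw [if_neg hnzx']
    have c1 : (sCount G w tp p' x : ℝ) = (dy:ℝ) - (μ:ℝ) := by exact_mod_cast E1
    have c2 : (sCount G w tp p' x : ℝ) + (dCount G w tp p' x : ℝ) = (sy:ℝ) + (dy:ℝ) := by
      exact_mod_cast hsum'x
    rw [c2, c1]
  have huy' : ucost G w τ tp p' y = max 0 (τ - ((dx:ℝ)-(μ:ℝ))/((sx:ℝ)+(dx:ℝ))) := by
    unfold ucost
    rw [if_neg hnzy']
    have c1 : (sCount G w tp p' y : ℝ) = (dx:ℝ) - (μ:ℝ) := by exact_mod_cast E3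
    have c2 : (sCount G w tp p' y : ℝ) + (dCount G w tp p' y : ℝ) = (sx:ℝ) + (dx:ℝ) := by
      exact_mod_cast hsum'y
    rw [c2, c1]
  -- extracting the ratio inequalities
  have hfrx : (sx:ℝ)/((sx:ℝ)+dx) < τ
      ∧ (sx:ℝ)/((sx:ℝ)+dx) < ((dy:ℝ)-(μ:ℝ))/((sy:ℝ)+dy) := by
    rw [hux, hux'] at hx
    have h0 : (0:ℝ) ≤ max 0 (τ - ((dy:ℝ)-(μ:ℝ))/((sy:ℝ)+dy)) := le_max_left _ _
    have hA : 0 < τ - (sx:ℝ)/((sx:ℝ)+dx) := by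
      by_contra hcon
      push_neg at hcon
      have hmx : max 0 (τ - (sx:ℝ)/((sx:ℝ)+dx)) = 0 := max_eq_left (by linarith)
      rw [hmx] at hx
      linarith
    refine ⟨by linarith, ?_⟩
    have h1 : max 0 (τ - (sx:ℝ)/((sx:ℝ)+dx)) = τ - (sx:ℝ)/((sx:ℝ)+dx) :=
      max_eq_right hA.le
    have h2 : τ - ((dy:ℝ)-(μ:ℝ))/((sy:ℝ)+dy)
        ≤ max 0 (τ - ((dy:ℝ)-(μ:ℝ))/((sy:ℝ)+dy)) := le_max_right _ _
    rw [h1] at hx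
    linarith
  have hfry : (sy:ℝ)/((sy:ℝ)+dy) < τ
      ∧ (sy:ℝ)/((sy:ℝ)+dy) < ((dx:ℝ)-(μ:ℝ))/((sx:ℝ)+dx) := by
    rw [huy, huy'] at hy
    have h0 : (0:ℝ) ≤ max 0 (τ - ((dx:ℝ)-(μ:ℝ))/((sx:ℝ)+dx)) := le_max_left _ _
    have hA : 0 < τ - (sy:ℝ)/((sy:ℝ)+dy) := by
      by_contra hcon
      push_neg at hcon
      have hmy : max 0 (τ - (sy:ℝ)/((sy:ℝ)+dy)) = 0 := max_eq_left (by linarith)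
      rw [hmy] at hy
      linarith
    refine ⟨by linarith, ?_⟩
    have h1 : max 0 (τ - (sy:ℝ)/((sy:ℝ)+dy)) = τ - (sy:ℝ)/((sy:ℝ)+dy) :=
      max_eq_right hA.le
    have h2 : τ - ((dx:ℝ)-(μ:ℝ))/((sx:ℝ)+dx)
        ≤ max 0 (τ - ((dx:ℝ)-(μ:ℝ))/((sx:ℝ)+dx)) := le_max_right _ _
    rw [h1] at hy
    linarith
  -- integer versions
  have hsxdxZ : (sx:ℤ) < dx := by
    have h := (div_lt_iff₀ hnuxR).mp (lt_of_lt_of_le hfrx.1 hτ)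
    have : (sx:ℝ) < (dx:ℝ) := by linarith
    exact_mod_cast this
  have hsydyZ : (sy:ℤ) < dy := by
    have h := (div_lt_iff₀ hnvyR).mp (lt_of_lt_of_le hfry.1 hτ)
    have : (sy:ℝ) < (dy:ℝ) := by linarith
    exact_mod_cast this
  have hcrossx : (sx:ℤ) * ((sy:ℤ) + dy) < ((dy:ℤ) - μ) * ((sx:ℤ) + dx) := by
    have h := (div_lt_div_iff₀ hnuxR hnvyR).mp hfrx.2
    exact_mod_cast h
  have hcrossy : (sy:ℤ) * ((sx:ℤ) + dx) < ((dx:ℤ) - μ) * ((sy:ℤ) + dy) := by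
    have h := (div_lt_div_iff₀ hnvyR hnuxR).mp hfry.2
    exact_mod_cast h
  have harith : (sx:ℤ) + sy + 2*μ - dx - dy < 0 :=
    potential_arith sx dx sy dy μ hμ01 hsxdxZ hsydyZ hcrossx hcrossy
  -- the double-sum indicator formulation of the potential
  set F : I → I → ℤ := fun z z' => ind (p z' ∈ nbhd G w (p z) ∧ tp z' ≠ tp z) with hFdef
  set F' : I → I → ℤ := fun z z' => ind (p z' ∈ nbhd G w (p z) ∧ tp (σ z') ≠ tp (σ z))
    with hF'def
  have hsum1 : ∑ z, (dCount G w tp p z : ℤ) = ∑ z, ∑ z', F z z' :=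
    Finset.sum_congr rfl fun z _ => by rw [hdC z]; exact cnt_eq_sum _
  have hsum2 : ∑ z, (dCount G w tp p' z : ℤ) = ∑ z, ∑ z', F' z z' := by
    calc ∑ z, (dCount G w tp p' z : ℤ)
        = ∑ z, (dCount G w tp p' (σ z) : ℤ) :=
          (Equiv.sum_comp σ (fun z => (dCount G w tp p' z : ℤ))).symm
      _ = ∑ z, ∑ z', F' z z' := by
          refine Finset.sum_congr rfl fun z _ => ?_
          rw [hdC' (σ z), hσσ z]
          exact cnt_eq_sum _
  have hFsymm : ∀ z z' : I, F z z' = F z' z := fun z z' =>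
    ind_congr (and_congr (hnbsymm _ _) ne_comm)
  have hF'symm : ∀ z z' : I, F' z z' = F' z' z := fun z z' =>
    ind_congr (and_congr (hnbsymm _ _) ne_comm)
  have hOff : ∀ z z' : I, z ≠ x → z ≠ y → z' ≠ x → z' ≠ y → F' z z' = F z z' := by
    intro z z' hzx hzy hz'x hz'y
    show ind (p z' ∈ nbhd G w (p z) ∧ tp (σ z') ≠ tp (σ z))
        = ind (p z' ∈ nbhd G w (p z) ∧ tp z' ≠ tp z)
    rw [hσo z hzx hzy, hσo z' hz'x hz'y]
  have hPair : ∀ z z' : I, (z = x ∨ z = y) → (z' = x ∨ z' = y) → F' z z' = F z z' := by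
    have hxx : ∀ u : I, F' u u = F u u := by
      intro u
      show ind (p u ∈ nbhd G w (p u) ∧ tp (σ u) ≠ tp (σ u))
          = ind (p u ∈ nbhd G w (p u) ∧ tp u ≠ tp u)
      rw [ind_false (fun h => hself _ h.1), ind_false (fun h => hself _ h.1)]
    have hxy' : F' x y = F x y := by
      show ind (p y ∈ nbhd G w (p x) ∧ tp (σ y) ≠ tp (σ x))
          = ind (p y ∈ nbhd G w (p x) ∧ tp y ≠ tp x)
      rw [hσx, hσy]
      exact ind_congr (and_congr Iff.rfl ne_comm)
    have hyx' : F' y x = F y x := by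
      show ind (p x ∈ nbhd G w (p y) ∧ tp (σ x) ≠ tp (σ y))
          = ind (p x ∈ nbhd G w (p y) ∧ tp x ≠ tp y)
      rw [hσx, hσy]
      exact ind_congr (and_congr Iff.rfl ne_comm)
    rintro z z' (rfl | rfl) (rfl | rfl)
    · exact hxx _
    · exact hxy'
    · exact hyx'
    · exact hxx _

  -- row sums for x and y
  have hgx : ∑ z', (F' x z' - F x z') = (sx : ℤ) + μ - dx := by
    rw [Finset.sum_sub_distrib]
    have h1 : ∑ z', F x z' = (dx : ℤ) := (cnt_eq_sum _).symm
    have h2 : ∑ z', F' x z' = (sx : ℤ) + μ := by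
      have hQ : ∑ z', F' x z'
          = (cnt (fun z' => p z' ∈ nbhd G w (p x) ∧ tp (σ z') ≠ tp (σ x)) : ℤ) :=
        (cnt_eq_sum _).symm
      have h : (cnt (fun z' => p z' ∈ nbhd G w (p x) ∧ tp (σ z') ≠ tp (σ x)) : ℤ)
          = (sx : ℤ)
            + (ind (p x ∈ nbhd G w (p x) ∧ tp (σ x) ≠ tp (σ x))
                - ind (p x ∈ nbhd G w (p x) ∧ tp x = tp x))
            + (ind (p y ∈ nbhd G w (p x) ∧ tp (σ y) ≠ tp (σ x))
                - ind (p y ∈ nbhd G w (p x) ∧ tp y = tp x)) :=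
        cnt_except _ _ x y hxy (fun z hzx hzy => by
          rw [hσo z hzx hzy, hσx]
          exact and_congr_right fun _ => (hbool1 (tp z)).symm)
      have i1 : ind (p x ∈ nbhd G w (p x) ∧ tp (σ x) ≠ tp (σ x)) = 0 := by
        apply ind_false; rintro ⟨hc, -⟩; exact hself _ hc
      have i2 : ind (p x ∈ nbhd G w (p x) ∧ tp x = tp x) = 0 := by
        apply ind_false; rintro ⟨hc, -⟩; exact hself _ hc
      have i3 : ind (p y ∈ nbhd G w (p x) ∧ tp (σ y) ≠ tp (σ x)) = μ := by
        rw [hμdef]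
        refine ind_congr ⟨fun h => (hnbsymm _ _).mp h.1, fun h => ⟨(hnbsymm _ _).mp h, ?_⟩⟩
        rw [hσx, hσy]; exact hab
      have i4 : ind (p y ∈ nbhd G w (p x) ∧ tp y = tp x) = 0 := by
        apply ind_false; rintro ⟨-, hc⟩; exact hab hc.symm
      rw [hQ, h, i1, i2, i3, i4]
      ring
    rw [h1, h2]
  have hgy : ∑ z', (F' y z' - F y z') = (sy : ℤ) + μ - dy := by
    rw [Finset.sum_sub_distrib]
    have h1 : ∑ z', F y z' = (dy : ℤ) := (cnt_eq_sum _).symm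
    have h2 : ∑ z', F' y z' = (sy : ℤ) + μ := by
      have hQ : ∑ z', F' y z'
          = (cnt (fun z' => p z' ∈ nbhd G w (p y) ∧ tp (σ z') ≠ tp (σ y)) : ℤ) :=
        (cnt_eq_sum _).symm
      have h : (cnt (fun z' => p z' ∈ nbhd G w (p y) ∧ tp (σ z') ≠ tp (σ y)) : ℤ)
          = (sy : ℤ)
            + (ind (p x ∈ nbhd G w (p y) ∧ tp (σ x) ≠ tp (σ y))
                - ind (p x ∈ nbhd G w (p y) ∧ tp x = tp y))
            + (ind (p y ∈ nbhd G w (p y) ∧ tp (σ y) ≠ tp (σ y))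
                - ind (p y ∈ nbhd G w (p y) ∧ tp y = tp y)) :=
        cnt_except _ _ x y hxy (fun z hzx hzy => by
          rw [hσo z hzx hzy, hσy]
          exact and_congr_right fun _ => (hbool2 (tp z)).symm)
      have i1 : ind (p x ∈ nbhd G w (p y) ∧ tp (σ x) ≠ tp (σ y)) = μ := by
        rw [hμdef]
        refine ind_congr ⟨fun h => h.1, fun h => ⟨h, ?_⟩⟩
        rw [hσx, hσy]; exact fun hh => hab hh.symm
      have i2 : ind (p x ∈ nbhd G w (p y) ∧ tp x = tp y) = 0 := by
        apply ind_false; rintro ⟨-, hc⟩; exact hab hc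
      have i3 : ind (p y ∈ nbhd G w (p y) ∧ tp (σ y) ≠ tp (σ y)) = 0 := by
        apply ind_false; rintro ⟨hc, -⟩; exact hself _ hc
      have i4 : ind (p y ∈ nbhd G w (p y) ∧ tp y = tp y) = 0 := by
        apply ind_false; rintro ⟨hc, -⟩; exact hself _ hc
      rw [hQ, h, i1, i2, i3, i4]
      ring
    rw [h1, h2]
  -- rows outside {x, y}
  have hrow : ∀ z : I, z ≠ x → z ≠ y →
      ∑ z', (F' z z' - F z z') = (F' z x - F z x) + (F' z y - F z y) := by
    intro z hzx hzy
    have h2 : ∑ z' ∈ ({x, y} : Finset I), (F' z z' - F z z')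
        = (F' z x - F z x) + (F' z y - F z y) := Finset.sum_pair hxy
    rw [← h2]
    refine (Finset.sum_subset (Finset.subset_univ _) ?_).symm
    intro z' _ hz'
    simp only [Finset.mem_insert, Finset.mem_singleton, not_or] at hz'
    rw [hOff z z' hzx hzy hz'.1 hz'.2, sub_self]
  -- total difference
  have hD : ∑ z, ∑ z', F' z z' - ∑ z, ∑ z', F z z'
      = 2 * (((sx : ℤ) + μ - dx) + ((sy : ℤ) + μ - dy)) := by
    have hdist : ∑ z, ∑ z', F' z z' - ∑ z, ∑ z', F z z'
        = ∑ z, ∑ z', (F' z z' - F z z') := by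
      rw [← Finset.sum_sub_distrib]
      exact Finset.sum_congr rfl fun z _ => (Finset.sum_sub_distrib _ _).symm
    have hsdiff : ∑ z ∈ (Finset.univ \ ({x, y} : Finset I)), (∑ z', (F' z z' - F z z'))
        + ∑ z ∈ ({x, y} : Finset I), (∑ z', (F' z z' - F z z'))
        = ∑ z, ∑ z', (F' z z' - F z z') :=
      Finset.sum_sdiff (Finset.subset_univ _)
    have hpairsum : ∑ z ∈ ({x, y} : Finset I), (∑ z', (F' z z' - F z z'))
        = ((sx : ℤ) + μ - dx) + ((sy : ℤ) + μ - dy) := by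
      rw [Finset.sum_pair hxy, hgx, hgy]
    have hrest : ∑ z ∈ (Finset.univ \ ({x, y} : Finset I)), (∑ z', (F' z z' - F z z'))
        = ((sx : ℤ) + μ - dx) + ((sy : ℤ) + μ - dy) := by
      have hr1 : ∑ z ∈ (Finset.univ \ ({x, y} : Finset I)), (∑ z', (F' z z' - F z z'))
          = ∑ z ∈ (Finset.univ \ ({x, y} : Finset I)),
              ((F' z x - F z x) + (F' z y - F z y)) := by
        refine Finset.sum_congr rfl fun z hz => ?_
        rw [Finset.mem_sdiff] at hz
        have hz' := hz.2
        simp only [Finset.mem_insert, Finset.mem_singleton, not_or] at hz'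
        exact hrow z hz'.1 hz'.2
      have hr2 : ∑ z ∈ (Finset.univ \ ({x, y} : Finset I)),
            ((F' z x - F z x) + (F' z y - F z y))
          + ∑ z ∈ ({x, y} : Finset I), ((F' z x - F z x) + (F' z y - F z y))
          = ∑ z, ((F' z x - F z x) + (F' z y - F z y)) :=
        Finset.sum_sdiff (Finset.subset_univ _)
      have hr3 : ∑ z ∈ ({x, y} : Finset I), ((F' z x - F z x) + (F' z y - F z y)) = 0 := by
        rw [Finset.sum_pair hxy]
        rw [hPair x x (Or.inl rfl) (Or.inl rfl), hPair x y (Or.inl rfl) (Or.inr rfl),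
          hPair y x (Or.inr rfl) (Or.inl rfl), hPair y y (Or.inr rfl) (Or.inr rfl)]
        ring
      have hr4 : ∑ z, ((F' z x - F z x) + (F' z y - F z y))
          = ((sx : ℤ) + μ - dx) + ((sy : ℤ) + μ - dy) := by
        rw [Finset.sum_add_distrib]
        have hc1 : ∑ z, (F' z x - F z x) = ∑ z, (F' x z - F x z) :=
          Finset.sum_congr rfl fun z _ => by rw [hF'symm, hFsymm]
        have hc2 : ∑ z, (F' z y - F z y) = ∑ z, (F' y z - F y z) :=
          Finset.sum_congr rfl fun z _ => by rw [hF'symm, hFsymm]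
        rw [hc1, hc2, hgx, hgy]
      linarith [hr1, hr2, hr3, hr4]
    linarith [hdist, hsdiff, hpairsum, hrest]
  -- conclusion
  have hlt : ∑ z, (dCount G w tp p' z : ℤ) < ∑ z, (dCount G w tp p z : ℤ) := by
    rw [hsum1, hsum2]
    linarith [hD, harith]
  have hltN : ∑ z, dCount G w tp p' z < ∑ z, dCount G w tp p z := by
    exact_mod_cast hlt
  have hR : ∑ z : I, (dCount G w tp p' z : ℝ) < ∑ z : I, (dCount G w tp p z : ℝ) := by
    exact_mod_cast hltN
  unfold Phi
  have := mul_lt_mul_of_pos_left hR (by norm_num : (0:ℝ) < 1/2)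
  exact this
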